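/- Let G be a group such that every subgroup of infinite index in G is locally free and no subgroup of finite index in G is locally free. Then there exists a normal subgroup N ⊴ G of infinite index such that every normal subgroup of G strictly containing N has finite index in G. -/

import Mathlib

/-- A group is locally free if every finitely generated subgroup of it is a free group. -/
def IsLocallyFree (G : Type*) [Group G] : Prop :=
  ∀ H : Subgroup G, H.FG → Nonempty (IsFreeGroup H)

lemma isLocallyFree_of_subsingleton (G : Type*) [Group G] [Subsingleton G] :
    IsLocallyFree G := by
  intro H _
  haveI : Unique H := ⟨⟨1⟩, fun a => Subtype.ext (Subsingleton.elim _ _)⟩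
  exact ⟨IsFreeGroup.ofMulEquiv (MulEquiv.ofUnique (M := FreeGroup Empty) (N := H))⟩

/-- A locally free statement for subgroups of `G`: every f.g. subgroup of `G` contained in `K`
is free, given `IsLocallyFree K`. -/
lemma free_of_le {G : Type*} [Group G] {H K : Subgroup G} (hK : IsLocallyFree K)
    (hHK : H ≤ K) (hfg : H.FG) : Nonempty (IsFreeGroup H) := by
  have e : (H.subgroupOf K) ≃* H := Subgroup.subgroupOfEquivOfLe hHK
  have hGfg : Group.FG H := (Group.fg_iff_subgroup_fg H).2 hfg
  have hfg' : (H.subgroupOf K).FG := by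
    rw [← Group.fg_iff_subgroup_fg]
    exact Group.fg_of_surjective (f := e.symm.toMonoidHom) e.symm.surjective
  obtain ⟨hfree⟩ := hK _ hfg'
  exact ⟨IsFreeGroup.ofMulEquiv e⟩

lemma finset_subset_chain_mem {G : Type*} [Group G] {c : Set (Subgroup G)}
    (hcne : c.Nonempty) (hdir : DirectedOn (· ≤ ·) c) (s : Finset G)
    (hs : (s : Set G) ⊆ (sSup c : Subgroup G)) : ∃ K ∈ c, (s : Set G) ⊆ K := by
  classical
  induction s using Finset.induction_on with
  | empty => exact ⟨hcne.choose, hcne.choose_spec, by simp⟩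
  | @insert a s ha ih =>
    obtain ⟨K₂, hK₂, hsK₂⟩ := ih (fun y hy => hs (Finset.mem_insert_of_mem hy))
    have haMem : a ∈ sSup c := hs (Finset.mem_insert_self a s)
    rw [Subgroup.mem_sSup_of_directedOn hcne hdir] at haMem
    obtain ⟨K₁, hK₁, haK₁⟩ := haMem
    obtain ⟨K, hKc, h₁K, h₂K⟩ := hdir K₁ hK₁ K₂ hK₂
    refine ⟨K, hKc, ?_⟩
    rw [Finset.coe_insert]
    exact Set.insert_subset (h₁K haK₁) (hsK₂.trans h₂K)

/-- If every subgroup of infinite index in `G` is locally free and no subgroup of finite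
index in `G` is locally free, then there is a normal subgroup `N` of infinite index such
that every normal subgroup strictly containing `N` has finite index. -/
theorem exists_maximal_infinite_index_normal_subgroup {G : Type*} [Group G]
    (h₁ : ∀ H : Subgroup G, H.index = 0 → IsLocallyFree H)
    (h₂ : ∀ H : Subgroup G, H.index ≠ 0 → ¬ IsLocallyFree H) :
    ∃ N : Subgroup G, N.Normal ∧ N.index = 0 ∧
      ∀ Δ : Subgroup G, Δ.Normal → N < Δ → Δ.index ≠ 0 := by
  -- ⊥ has infinite index
  have hbot : (⊥ : Subgroup G).index = 0 := by
    by_contra hb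
    exact h₂ ⊥ hb (isLocallyFree_of_subsingleton _)
  set S : Set (Subgroup G) := {N | N.Normal ∧ N.index = 0} with hS
  -- Zorn's lemma on S
  have hchain : ∀ c ⊆ S, IsChain (· ≤ ·) c → ∃ ub ∈ S, ∀ z ∈ c, z ≤ ub := by
    intro c hcS hc
    rcases c.eq_empty_or_nonempty with rfl | hcne
    · exact ⟨⊥, ⟨inferInstance, hbot⟩, by simp⟩
    have hdir : DirectedOn (· ≤ ·) c := hc.directedOn
    refine ⟨sSup c, ⟨?_, ?_⟩, fun z hz => le_sSup hz⟩
    · -- normality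
      constructor
      intro n hn g
      rw [Subgroup.mem_sSup_of_directedOn hcne hdir] at hn ⊢
      obtain ⟨K, hK, hnK⟩ := hn
      exact ⟨K, hK, (hcS hK).1.conj_mem n hnK g⟩
    · -- infinite index: show sSup c is locally free
      by_contra hi
      refine h₂ _ hi ?_
      intro H hHfg
      -- H is a f.g. subgroup of ↥(sSup c); map it to a subgroup of G
      have hfree : Nonempty (IsFreeGroup (H.map (sSup c).subtype)) := by
        obtain ⟨T, hT⟩ := hHfg
        set H' : Subgroup G := H.map (sSup c).subtype with hH'
        classical
        have hfg' : H'.FG :=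
          ⟨T.image (sSup c).subtype, by
            rw [Finset.coe_image, ← MonoidHom.map_closure, hT]⟩
        obtain ⟨T', hT'⟩ := hfg'
        -- every element of H' lies in sSup c
        have hH'le : H' ≤ sSup c := by
          rw [hH']
          rintro y ⟨⟨y, hy⟩, -, rfl⟩
          exact hy
        -- find K ∈ c containing T'
        obtain ⟨K, hKc, hTK⟩ := finset_subset_chain_mem hcne hdir T' (by
          intro a haT
          exact hH'le (hT' ▸ Subgroup.subset_closure haT))
        have hH'K : H' ≤ K := by
          rw [← hT']
          exact Subgroup.closure_le K |>.2 hTK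
        exact free_of_le (h₁ K (hcS hKc).2) hH'K ⟨T', hT'⟩
      -- transfer freeness back to H
      obtain ⟨hf⟩ := hfree
      exact ⟨IsFreeGroup.ofMulEquiv
        (Subgroup.equivMapOfInjective H _ (sSup c).subtype_injective).symm⟩
  obtain ⟨N, hNmax⟩ := zorn_le₀ S hchain
  refine ⟨N, hNmax.prop.1, hNmax.prop.2, fun Δ hΔn hNΔ hΔi => ?_⟩
  exact hNΔ.not_ge (hNmax.2 (⟨hΔn, hΔi⟩ : Δ ∈ S) hNΔ.le)
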